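/- Let u(x) = Σ_{n≥2} K_n χ_{I_n}(x) and σ(x) = Σ_{n≥2} χ_{J_n}(x) on ℝ, where K_n = n² log(e+n)^{-3}, I_n = (eⁿ + n − 1, eⁿ + n), J_n = (eⁿ, eⁿ + 1), and let Φ(t) = t log(e+t)². Then, with Q_n = (eⁿ, eⁿ + n), the product of normalized Luxemburg norms ‖u‖_{Φ,Q_n} ‖σ‖_{Φ,Q_n} is bounded below by c · log(e+n) for an absolute constant c > 0 and all n ≥ 2; in particular sup over intervals Q of ‖u‖_{Φ,Q}‖σ‖_{Φ,Q} = ∞. -/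

import Mathlib

open MeasureTheory Real Set Filter

/-- The normalized Luxemburg (Orlicz) norm of `v` over the set `E`:
`inf { λ > 0 : μ(E)⁻¹ ∫_E A(|v|/λ) dμ ≤ 1 }`. -/
noncomputable def luxNorm {X : Type*} [MeasurableSpace X] (μ : Measure X)
    (A : ℝ → ℝ) (E : Set X) (v : X → ℝ) : ℝ :=
  sInf {l : ℝ | 0 < l ∧ ∫⁻ x in E, ENNReal.ofReal (A (|v x| / l)) ∂μ ≤ μ E}

/-- A Young function: continuous, convex, increasing on `[0,∞)`, vanishing at `0`,
with superlinear growth at infinity. -/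
def IsYoung (A : ℝ → ℝ) : Prop :=
  ContinuousOn A (Set.Ici 0) ∧ ConvexOn ℝ (Set.Ici 0) A ∧ MonotoneOn A (Set.Ici 0) ∧
    A 0 = 0 ∧ Filter.Tendsto (fun t => A t / t) Filter.atTop Filter.atTop

/-- The weight `u = Σ_{n≥2} n² log(e+n)⁻³ χ_{(eⁿ+n−1, eⁿ+n)}`. -/
noncomputable def exU : ℝ → ℝ := fun x =>
  ∑' n : ℕ, if 2 ≤ n then
    Set.indicator (Set.Ioo (Real.exp n + n - 1) (Real.exp n + n))
      (fun _ => (n : ℝ) ^ 2 / Real.log (Real.exp 1 + n) ^ 3) x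
  else 0

/-- The weight `σ = Σ_{n≥2} χ_{(eⁿ, eⁿ+1)}`. -/
noncomputable def exSigma : ℝ → ℝ := fun x =>
  ∑' n : ℕ, if 2 ≤ n then
    Set.indicator (Set.Ioo (Real.exp n) (Real.exp n + 1)) (fun _ => (1 : ℝ)) x
  else 0

/-- The log-bump `Φ(t) = t log(e+t)²`. -/
noncomputable def exPhi : ℝ → ℝ := fun t => t * Real.log (Real.exp 1 + t) ^ 2

/- ### Auxiliary lemmas -/

lemma exPhi_zero' : exPhi 0 = 0 := by simp [exPhi]

lemma two_le_e' : (2:ℝ) ≤ Real.exp 1 := by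
  have := Real.add_one_le_exp (1:ℝ); linarith

lemma exPhi_mono' {a b : ℝ} (ha : 0 ≤ a) (hab : a ≤ b) : exPhi a ≤ exPhi b := by
  have h1 : (1:ℝ) ≤ Real.exp 1 + a := by nlinarith [two_le_e']
  have hl1 : 0 ≤ Real.log (Real.exp 1 + a) := Real.log_nonneg h1
  have hl2 : Real.log (Real.exp 1 + a) ≤ Real.log (Real.exp 1 + b) :=
    Real.log_le_log (by linarith) (by linarith)
  have : Real.log (Real.exp 1 + a) ^ 2 ≤ Real.log (Real.exp 1 + b) ^ 2 := by
    nlinarith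
  unfold exPhi
  nlinarith [Real.log_nonneg (show (1:ℝ) ≤ Real.exp 1 + b by linarith)]

lemma key_ineq' {m n : ℕ} (hmn : m < n) :
    Real.exp m + m ≤ Real.exp n := by
  have h1 : (m:ℝ) + 1 ≤ Real.exp m := by
    have := Real.add_one_le_exp (m:ℝ); linarith
  have h3 : 2 * Real.exp m ≤ Real.exp 1 * Real.exp m := by
    nlinarith [two_le_e', Real.exp_pos (m:ℝ)]
  have h4 : Real.exp 1 * Real.exp m = Real.exp ((m:ℝ)+1) := by
    rw [← Real.exp_add]; ring_nf
  have h5 : Real.exp ((m:ℝ)+1) ≤ Real.exp n := by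
    apply Real.exp_le_exp.2; exact_mod_cast hmn
  linarith [h4 ▸ h3]

lemma phi_lb' {n : ℕ} (hn : 2 ≤ n) :
    (n:ℝ) < exPhi (9 * n / Real.log (Real.exp 1 + n) ^ 2) := by
  set L := Real.log (Real.exp 1 + n) with hL
  have hne : (2:ℝ) ≤ n := by exact_mod_cast hn
  have he : (0:ℝ) < Real.exp 1 := Real.exp_pos 1
  have hen : (1:ℝ) < Real.exp 1 + n := by nlinarith [two_le_e']
  have hLpos : 0 < L := Real.log_pos hen
  set s := Real.exp (L/3) with hs
  have hspos : 0 < s := Real.exp_pos _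
  have hs3 : s^3 = Real.exp 1 + n := by
    rw [hs, ← Real.exp_nat_mul]
    norm_num
    rw [show (3:ℝ) * (L/3) = L by ring, hL, Real.exp_log (by linarith)]
  have hlogs : Real.log s = L/3 := by rw [hs, Real.log_exp]
  have hle : L * Real.exp 1 ≤ 3 * s := by
    have h := Real.log_le_sub_one_of_pos (show 0 < s / Real.exp 1 from
      div_pos hspos he)
    have h2 : Real.log (s / Real.exp 1) = L/3 - 1 := by
      rw [Real.log_div (ne_of_gt hspos) (ne_of_gt he), hlogs, Real.log_exp]
    rw [h2] at h
    have h3 : s / Real.exp 1 * Real.exp 1 = s := div_mul_cancel₀ s (ne_of_gt he)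
    nlinarith
  have h9 : L^2 * s < 9 * n := by
    have h1 : (L * Real.exp 1)^2 ≤ (3*s)^2 :=
      pow_le_pow_left₀ (by positivity) hle 2
    have h2 : L^2 * s * (Real.exp 1)^2 ≤ 9 * s^3 := by nlinarith
    have heu : Real.exp 1 < 3 := lt_trans Real.exp_one_lt_d9 (by norm_num)
    have he2 : (4:ℝ) ≤ (Real.exp 1)^2 := by nlinarith [two_le_e']
    have h3 : 9 * (Real.exp 1 + n) < 9 * n * (Real.exp 1)^2 := by
      nlinarith [two_le_e']
    rw [hs3] at h2
    nlinarith [sq_nonneg (Real.exp 1)]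
  set t := 9 * n / L^2 with ht
  have htL : t * L^2 = 9 * n := by
    rw [ht]; field_simp
  have htpos : 0 < t := by positivity
  have hst : s < t := by nlinarith
  have hlt : L/3 < Real.log (Real.exp 1 + t) := by
    rw [← hlogs]
    exact Real.log_lt_log hspos (by linarith)
  have hsq : L^2/9 < Real.log (Real.exp 1 + t) ^ 2 := by nlinarith
  show (n:ℝ) < t * Real.log (Real.exp 1 + t) ^ 2
  nlinarith

lemma exPhi_half' : exPhi (1/2) ≤ 2 := by
  have h1 : Real.exp 1 + 1/2 ≤ Real.exp 2 := by
    have : Real.exp 2 = Real.exp 1 * Real.exp 1 := by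
      rw [← Real.exp_add]; norm_num
    nlinarith [two_le_e']
  have h2 : Real.log (Real.exp 1 + 1/2) ≤ 2 := by
    calc Real.log (Real.exp 1 + 1/2) ≤ Real.log (Real.exp 2) :=
          Real.log_le_log (by positivity) h1
    _ = 2 := Real.log_exp 2
  have h3 : 0 ≤ Real.log (Real.exp 1 + 1/2) :=
    Real.log_nonneg (by nlinarith [two_le_e'])
  unfold exPhi
  nlinarith

lemma lint_eval' (Q : Set ℝ) (hQ : MeasurableSet Q) (A B : ℝ)
    (hsub : Set.Ioo A B ⊆ Q) (c l : ℝ) (hc : 0 ≤ c) (v : ℝ → ℝ)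
    (hv : ∀ x ∈ Q, v x = Set.indicator (Set.Ioo A B) (fun _ => c) x) :
    ∫⁻ x in Q, ENNReal.ofReal (exPhi (|v x| / l)) =
      ENNReal.ofReal (exPhi (c/l)) * ENNReal.ofReal (B - A) := by
  rw [setLIntegral_congr_fun hQ
    (g := fun x => Set.indicator (Set.Ioo A B)
      (fun _ => ENNReal.ofReal (exPhi (c/l))) x) ?_]
  · rw [lintegral_indicator measurableSet_Ioo, setLIntegral_const,
      Measure.restrict_apply measurableSet_Ioo,
      Set.inter_eq_left.2 hsub, Real.volume_Ioo]
  · intro x hx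
    show ENNReal.ofReal (exPhi (|v x| / l)) = Set.indicator (Set.Ioo A B) (fun _ => ENNReal.ofReal (exPhi (c/l))) x
    by_cases hI : x ∈ Set.Ioo A B
    · rw [hv x hx, Set.indicator_of_mem hI, Set.indicator_of_mem hI,
        abs_of_nonneg hc]
    · rw [hv x hx, Set.indicator_of_notMem hI, Set.indicator_of_notMem hI]
      simp [exPhi_zero']

lemma exU_on' {n : ℕ} (hn : 2 ≤ n) {x : ℝ}
    (hx : x ∈ Set.Ioo (Real.exp n) (Real.exp n + n)) :
    exU x = Set.indicator (Set.Ioo (Real.exp n + n - 1) (Real.exp n + n))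
      (fun _ => (n : ℝ) ^ 2 / Real.log (Real.exp 1 + n) ^ 3) x := by
  unfold exU
  rw [tsum_eq_single n ?_]
  · rw [if_pos hn]
  · intro m hm
    by_cases h2 : 2 ≤ m
    · rw [if_pos h2, Set.indicator_of_notMem ?_]
      intro hxm
      rcases lt_or_gt_of_ne hm with h | h
      · have := key_ineq' h
        have := hx.1
        have := hxm.2
        linarith
      · have := key_ineq' h
        have := hx.2
        have hm1 : (1:ℝ) ≤ m := by exact_mod_cast Nat.one_le_of_lt h2
        have := hxm.1
        linarith
    · rw [if_neg h2]

lemma exSigma_on' {n : ℕ} (hn : 2 ≤ n) {x : ℝ}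
    (hx : x ∈ Set.Ioo (Real.exp n) (Real.exp n + n)) :
    exSigma x = Set.indicator (Set.Ioo (Real.exp n) (Real.exp n + 1))
      (fun _ => (1:ℝ)) x := by
  unfold exSigma
  rw [tsum_eq_single n ?_]
  · rw [if_pos hn]
  · intro m hm
    by_cases h2 : 2 ≤ m
    · rw [if_pos h2, Set.indicator_of_notMem ?_]
      intro hxm
      rcases lt_or_gt_of_ne hm with h | h
      · have := key_ineq' h
        have := hx.1
        have := hxm.2
        have hm1 : (1:ℝ) ≤ m := by exact_mod_cast Nat.one_le_of_lt h2
        linarith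
      · have := key_ineq' h
        have := hx.2
        have := hxm.1
        linarith
    · rw [if_neg h2]

/-- Main lower bound for the Luxemburg norm of a single-bump function over `Q_n`. -/
lemma lux_ge' {n : ℕ} (hn : 2 ≤ n) {c A B : ℝ} (hc : 0 < c) (hBA : B - A = 1)
    (hsub : Set.Ioo A B ⊆ Set.Ioo (Real.exp n) (Real.exp n + n))
    {v : ℝ → ℝ}
    (hv : ∀ x ∈ Set.Ioo (Real.exp n) (Real.exp n + n),
      v x = Set.indicator (Set.Ioo A B) (fun _ => c) x) :
    c * Real.log (Real.exp 1 + n) ^ 2 / (9 * n) ≤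
      luxNorm volume exPhi (Set.Ioo (Real.exp n) (Real.exp n + n)) v := by
  set L := Real.log (Real.exp 1 + n) with hL
  have hne : (2:ℝ) ≤ n := by exact_mod_cast hn
  have hen : (1:ℝ) < Real.exp 1 + n := by nlinarith [two_le_e']
  have hLpos : 0 < L := Real.log_pos hen
  have hnpos : (0:ℝ) < n := by linarith
  have hvolQ : volume (Set.Ioo (Real.exp n) (Real.exp n + n)) =
      ENNReal.ofReal n := by
    rw [Real.volume_Ioo]; ring_nf
  -- characterize the defining set
  have hmem : ∀ l : ℝ, 0 < l →
      ((∫⁻ x in Set.Ioo (Real.exp n) (Real.exp n + n),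
        ENNReal.ofReal (exPhi (|v x| / l)) ∂volume ≤
          volume (Set.Ioo (Real.exp n) (Real.exp n + n))) ↔ exPhi (c/l) ≤ n) := by
    intro l hl
    rw [lint_eval' _ measurableSet_Ioo A B hsub c l hc.le v hv, hvolQ, hBA]
    rw [ENNReal.ofReal_one, mul_one]
    exact ENNReal.ofReal_le_ofReal_iff hnpos.le
  unfold luxNorm
  apply le_csInf
  · refine ⟨2*c, by linarith, ?_⟩
    rw [hmem (2*c) (by linarith)]
    have : c / (2*c) = 1/2 := by field_simp
    rw [this]
    linarith [exPhi_half']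
  · rintro l ⟨hl, hint⟩
    rw [hmem l hl] at hint
    by_contra hcon
    push_neg at hcon
    have haux : 9 * n / L^2 < c / l := by
      rw [div_lt_div_iff₀ (by positivity) hl]
      rw [lt_div_iff₀ (by positivity)] at hcon
      nlinarith
    have h1 : exPhi (9 * n / L^2) ≤ exPhi (c/l) :=
      exPhi_mono' (by positivity) haux.le
    have h2 := phi_lb' hn
    rw [← hL] at h2
    linarith

/- ### Main theorem -/

theorem double_bump_fails :
    (∃ c : ℝ, 0 < c ∧ ∀ n : ℕ, 2 ≤ n →
      c * Real.log (Real.exp 1 + n) ≤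
        luxNorm volume exPhi (Set.Ioo (Real.exp n) (Real.exp n + n)) exU *
          luxNorm volume exPhi (Set.Ioo (Real.exp n) (Real.exp n + n)) exSigma) ∧
      (∀ M : ℝ, ∃ a b : ℝ, a < b ∧
        M < luxNorm volume exPhi (Set.Ioo a b) exU *
              luxNorm volume exPhi (Set.Ioo a b) exSigma) := by
  have main : ∀ n : ℕ, 2 ≤ n →
      (1/81) * Real.log (Real.exp 1 + n) ≤
        luxNorm volume exPhi (Set.Ioo (Real.exp n) (Real.exp n + n)) exU *
          luxNorm volume exPhi (Set.Ioo (Real.exp n) (Real.exp n + n)) exSigma := by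
    intro n hn
    set L := Real.log (Real.exp 1 + n) with hL
    have hne : (2:ℝ) ≤ n := by exact_mod_cast hn
    have hen : (1:ℝ) < Real.exp 1 + n := by nlinarith [two_le_e']
    have hLpos : 0 < L := Real.log_pos hen
    have hnpos : (0:ℝ) < n := by linarith
    have hKpos : 0 < (n:ℝ)^2 / L^3 := by positivity
    have hu : ((n:ℝ)^2 / L^3) * L ^ 2 / (9 * n) ≤
        luxNorm volume exPhi (Set.Ioo (Real.exp n) (Real.exp n + n)) exU := by
      apply lux_ge' hn hKpos (by ring) ?_ (fun x hx => exU_on' hn hx)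
      intro x hx
      exact ⟨by linarith [hx.1], hx.2⟩
    have hs : (1:ℝ) * L ^ 2 / (9 * n) ≤
        luxNorm volume exPhi (Set.Ioo (Real.exp n) (Real.exp n + n)) exSigma := by
      apply lux_ge' hn one_pos (by ring) ?_ (fun x hx => exSigma_on' hn hx)
      intro x hx
      exact ⟨hx.1, by linarith [hx.2]⟩
    have h1 : 0 ≤ (1:ℝ) * L ^ 2 / (9 * n) := by positivity
    have h2 : 0 ≤ luxNorm volume exPhi (Set.Ioo (Real.exp n) (Real.exp n + n)) exU := by
      refine le_trans ?_ hu; positivity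
    have hprod := mul_le_mul hu hs h1 h2
    refine le_trans (le_of_eq ?_) hprod
    field_simp
    ring
  constructor
  · exact ⟨1/81, by norm_num, main⟩
  · intro M
    obtain ⟨n, hngt⟩ := exists_nat_gt (max 2 (Real.exp (81 * M)))
    have h2 : (2:ℝ) < n := lt_of_le_of_lt (le_max_left _ _) hngt
    have hn2 : 2 ≤ n := by exact_mod_cast h2.le
    have hM : M < (1/81) * Real.log (Real.exp 1 + n) := by
      have hexp : Real.exp (81 * M) < (n:ℝ) :=
        lt_of_le_of_lt (le_max_right _ _) hngt
      have : Real.exp (81 * M) < Real.exp 1 + n := by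
        have := Real.exp_pos 1; linarith
      have hlog : 81 * M < Real.log (Real.exp 1 + n) := by
        have := Real.log_lt_log (Real.exp_pos (81*M)) this
        rwa [Real.log_exp] at this
      linarith
    refine ⟨Real.exp n, Real.exp n + n, by linarith, ?_⟩
    exact lt_of_lt_of_le hM (main n hn2)
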